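/- The set $\Gamma_k^\circ := \{x \in \mathbf{R}^n : S_1(x) > 0, \ldots, S_k(x) > 0\}$ is an open convex cone in $\mathbf{R}^n$, and its closure equals $\Gamma_k := \{x \in \mathbf{R}^n : S_1(x) \ge 0, \ldots, S_k(x) \ge 0\}$. -/

import Mathlib

open Finset

noncomputable def esymm (n m : ℕ) (x : Fin n → ℝ) : ℝ :=
  ∑ s ∈ Finset.powersetCard m (Finset.univ : Finset (Fin n)), ∏ t ∈ s, x t

open Polynomial



/-- complex elementary symmetric function -/
noncomputable def eC (n m : ℕ) (w : Fin n → ℂ) : ℂ :=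
  ∑ s ∈ Finset.powersetCard m (Finset.univ : Finset (Fin n)), ∏ t ∈ s, w t

/-- polynomial `t ↦ eC n m (u + t v)` -/
noncomputable def polC (n m : ℕ) (u v : Fin n → ℂ) : Polynomial ℂ :=
  ∑ s ∈ Finset.powersetCard m (Finset.univ : Finset (Fin n)),
    ∏ i ∈ s, (Polynomial.C (u i) + Polynomial.C (v i) * Polynomial.X)

noncomputable def polR (n m : ℕ) (u v : Fin n → ℝ) : Polynomial ℝ :=
  ∑ s ∈ Finset.powersetCard m (Finset.univ : Finset (Fin n)),
    ∏ i ∈ s, (Polynomial.C (u i) + Polynomial.C (v i) * Polynomial.X)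

lemma eC_coe (n m : ℕ) (x : Fin n → ℝ) :
    eC n m (fun i => (x i : ℂ)) = (esymm n m x : ℂ) := by
  simp [eC, esymm]

lemma eval_polC (n m : ℕ) (u v : Fin n → ℂ) (t : ℂ) :
    (polC n m u v).eval t = eC n m (fun i => u i + t * v i) := by
  rw [polC, eval_finset_sum, eC]
  refine Finset.sum_congr rfl fun s _ => ?_
  rw [eval_prod]
  exact Finset.prod_congr rfl fun i _ => by simp; ring

lemma eval_polR (n m : ℕ) (u v : Fin n → ℝ) (t : ℝ) :
    (polR n m u v).eval t = esymm n m (fun i => u i + t * v i) := by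
  rw [polR, eval_finset_sum, esymm]
  refine Finset.sum_congr rfl fun s _ => ?_
  rw [eval_prod]
  exact Finset.prod_congr rfl fun i _ => by simp; ring

lemma map_polR (n m : ℕ) (u v : Fin n → ℝ) :
    (polR n m u v).map (algebraMap ℝ ℂ) = polC n m (fun i => (u i : ℂ)) (fun i => (v i : ℂ)) := by
  simp [polR, polC, Polynomial.map_sum, Polynomial.map_prod]

lemma natDegree_lin_le {R : Type*} [CommRing R] [Nontrivial R] (a b : R) :
    (Polynomial.C a + Polynomial.C b * Polynomial.X).natDegree ≤ 1 :=
  (natDegree_add_le _ _).trans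
    (max_le (by rw [natDegree_C]; exact Nat.zero_le _)
      ((natDegree_C_mul_le _ _).trans natDegree_X.le))

lemma natDegree_polC_le (n m : ℕ) (u v : Fin n → ℂ) :
    (polC n m u v).natDegree ≤ m := by
  refine (natDegree_sum_le _ _).trans ?_
  rw [Finset.fold_max_le]
  refine ⟨Nat.zero_le _, fun s hs => ?_⟩
  rw [Finset.mem_powersetCard] at hs
  refine le_trans (natDegree_prod_le _ _) (le_trans
    (Finset.sum_le_card_nsmul s _ 1 fun i _ => natDegree_lin_le _ _) ?_)
  simp [hs.2]

lemma coeff_polC_top (n m : ℕ) (u v : Fin n → ℂ) :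
    (polC n m u v).coeff m = eC n m v := by
  rw [polC, finset_sum_coeff, eC]
  refine Finset.sum_congr rfl fun s hs => ?_
  rw [Finset.mem_powersetCard] at hs
  have h := coeff_prod_of_natDegree_le s
      (fun i => Polynomial.C (u i) + Polynomial.C (v i) * Polynomial.X) 1 ?_
  · rw [hs.2] at h; rw [mul_one] at h; rw [h]
    refine Finset.prod_congr rfl fun i _ => ?_
    simp [coeff_C]
  · intro i _
    exact natDegree_lin_le _ _

lemma eC_smul (n m : ℕ) (c : ℂ) (w : Fin n → ℂ) :
    eC n m (c • w) = c ^ m * eC n m w := by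
  rw [eC, eC, Finset.mul_sum]
  refine Finset.sum_congr rfl fun s hs => ?_
  rw [Finset.mem_powersetCard] at hs
  rw [← hs.2, Pi.smul_def]
  simp [Finset.prod_mul_distrib, smul_eq_mul]

lemma esymm_smul (n m : ℕ) (c : ℝ) (x : Fin n → ℝ) :
    esymm n m (c • x) = c ^ m * esymm n m x := by
  rw [esymm, esymm, Finset.mul_sum]
  refine Finset.sum_congr rfl fun s hs => ?_
  rw [Finset.mem_powersetCard] at hs
  rw [← hs.2, Pi.smul_def]
  simp [Finset.prod_mul_distrib, smul_eq_mul]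

lemma continuous_eC (n m : ℕ) : Continuous (eC n m) :=
  continuous_finset_sum _ fun _ _ => continuous_finset_prod _ fun i _ => continuous_apply i

lemma continuous_esymm (n m : ℕ) : Continuous (esymm n m) :=
  continuous_finset_sum _ fun _ _ => continuous_finset_prod _ fun i _ => continuous_apply i

-- counting lemma
lemma sum_powersetCard_sum {M : Type*} [AddCommMonoid M] (n k m : ℕ) (hm : m ≤ k) (hk : k ≤ n)
    (g : Finset (Fin n) → M) :
    ∑ s ∈ powersetCard k (univ : Finset (Fin n)), ∑ a ∈ powersetCard m s, g a
      = (n - m).choose (k - m) • ∑ a ∈ powersetCard m (univ : Finset (Fin n)), g a := by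
  rw [Finset.sum_comm' (s := powersetCard k (univ : Finset (Fin n)))
      (t := fun s => powersetCard m s) (t' := powersetCard m (univ : Finset (Fin n)))
      (s' := fun a => (powersetCard k (univ : Finset (Fin n))).filter (fun s => a ⊆ s))
      (fun s a => by
        simp only [Finset.mem_powersetCard, Finset.mem_filter]
        constructor
        · rintro ⟨⟨_, hs⟩, has, ha⟩
          exact ⟨⟨⟨Finset.subset_univ s, hs⟩, has⟩, Finset.subset_univ a, ha⟩
        · rintro ⟨⟨⟨_, hs⟩, has⟩, _, ha⟩
          exact ⟨⟨Finset.subset_univ s, hs⟩, has, ha⟩)]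
  rw [Finset.smul_sum]
  refine Finset.sum_congr rfl fun a ha => ?_
  rw [Finset.mem_powersetCard] at ha
  rw [Finset.sum_const]
  congr 1
  have hcard : ((powersetCard k (univ : Finset (Fin n))).filter (fun s => a ⊆ s)).card
      = (powersetCard (k - m) (aᶜ)).card := by
    refine Finset.card_nbij' (fun s => s \ a) (fun b => b ∪ a) ?_ ?_ ?_ ?_
    · intro s hs
      simp only [Finset.mem_coe] at hs ⊢
      rw [Finset.mem_filter, Finset.mem_powersetCard] at hs
      rw [Finset.mem_powersetCard]
      refine ⟨fun x hx => ?_, ?_⟩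
      · rw [Finset.mem_sdiff] at hx
        simpa using hx.2
      · rw [Finset.card_sdiff_of_subset hs.2, hs.1.2, ha.2]
    · intro b hb
      simp only [Finset.mem_coe] at hb ⊢
      rw [Finset.mem_powersetCard] at hb
      have hdisj : Disjoint b a := by
        rw [Finset.disjoint_left]
        intro x hx
        have := hb.1 hx
        simpa using this
      rw [Finset.mem_filter, Finset.mem_powersetCard]
      refine ⟨⟨Finset.subset_univ _, ?_⟩, Finset.subset_union_right⟩
      rw [Finset.card_union_of_disjoint hdisj, hb.2, ha.2]
      omega
    · intro s hs
      rw [Finset.mem_coe, Finset.mem_filter] at hs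
      exact Finset.sdiff_union_of_subset hs.2
    · intro b hb
      rw [Finset.mem_coe, Finset.mem_powersetCard] at hb
      refine Finset.union_sdiff_cancel_right ?_
      rw [Finset.disjoint_left]
      intro x hx
      have := hb.1 hx
      simpa using this
  rw [hcard, Finset.card_powersetCard, Finset.card_compl, ha.2, Fintype.card_fin]

lemma esymm_zero' (n : ℕ) (x : Fin n → ℝ) : esymm n 0 x = 1 := by
  simp [esymm]

-- expansion of esymm along the all-ones direction
lemma esymm_shift (n m : ℕ) (hm : m ≤ n) (x : Fin n → ℝ) (t : ℝ) :
    esymm n m (fun i => x i + t) =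
      ∑ j ∈ Finset.range (m + 1), ((n - j).choose (m - j) : ℝ) * t ^ (m - j) * esymm n j x := by
  rw [esymm]
  have step1 : ∀ s ∈ powersetCard m (univ : Finset (Fin n)),
      ∏ i ∈ s, (x i + t) = ∑ j ∈ Finset.range (m + 1), ∑ a ∈ powersetCard j s,
        (∏ i ∈ a, x i) * t ^ (m - j) := by
    intro s hs
    rw [Finset.mem_powersetCard] at hs
    rw [Finset.prod_add]
    rw [← hs.2, Finset.sum_powerset]
    refine Finset.sum_congr rfl fun j hj => Finset.sum_congr rfl fun a haj => ?_
    rw [Finset.mem_powersetCard] at haj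
    rw [Finset.prod_const, Finset.card_sdiff_of_subset haj.1, haj.2]
  rw [Finset.sum_congr rfl step1, Finset.sum_comm]
  refine Finset.sum_congr rfl fun j hj => ?_
  rw [Finset.mem_range] at hj
  rw [sum_powersetCard_sum n m j (by omega) hm]
  rw [nsmul_eq_mul, esymm, Finset.mul_sum, Finset.mul_sum]
  refine Finset.sum_congr rfl fun a _ => by ring
def GS (n k : ℕ) : Set (Fin n → ℝ) := {x | ∀ m : ℕ, 1 ≤ m → m ≤ k → 0 < esymm n m x}

lemma esymm_nonneg_of_GS {n k : ℕ} {x : Fin n → ℝ} (hx : x ∈ GS n k) {j : ℕ} (hj : j ≤ k) :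
    0 ≤ esymm n j x := by
  rcases Nat.eq_zero_or_pos j with h | h
  · rw [h, esymm_zero']; norm_num
  · exact (hx j h hj).le

lemma shift_mem_GS {n k : ℕ} (hk1 : 1 ≤ k) (hkn : k ≤ n) {x : Fin n → ℝ} (hx : x ∈ GS n k)
    {t : ℝ} (ht : 0 ≤ t) : (fun i => x i + t) ∈ GS n k := by
  intro m h1 hm
  rw [esymm_shift n m (le_trans hm hkn) x t]
  refine Finset.sum_pos' (fun j hj => ?_) ⟨m, Finset.self_mem_range_succ m, ?_⟩
  · rw [Finset.mem_range] at hj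
    have h1 : (0:ℝ) ≤ ((n - j).choose (m - j) : ℝ) := by positivity
    have h2 : (0:ℝ) ≤ t ^ (m - j) := by positivity
    have h3 : 0 ≤ esymm n j x := esymm_nonneg_of_GS hx (by omega)
    positivity
  · simp only [Nat.sub_self, pow_zero, Nat.choose_zero_right, Nat.cast_one, one_mul, mul_one]
    exact hx m h1 hm

lemma shift_mem_GS_of_nonneg {n k : ℕ} (hk1 : 1 ≤ k) (hkn : k ≤ n) {x : Fin n → ℝ}
    (hx : ∀ m : ℕ, 1 ≤ m → m ≤ k → 0 ≤ esymm n m x) {t : ℝ} (ht : 0 < t) :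
    (fun i => x i + t) ∈ GS n k := by
  intro m h1 hm
  rw [esymm_shift n m (le_trans hm hkn) x t]
  refine Finset.sum_pos' (fun j hj => ?_) ⟨0, by simp, ?_⟩
  · rw [Finset.mem_range] at hj
    have h2 : (0:ℝ) ≤ ((n - j).choose (m - j) : ℝ) := by positivity
    have h3 : (0:ℝ) ≤ t ^ (m - j) := by positivity
    have h4 : 0 ≤ esymm n j x := by
      rcases Nat.eq_zero_or_pos j with h | h
      · rw [h, esymm_zero']; norm_num
      · exact hx j h (by omega)
    positivity
  · rw [esymm_zero', Nat.sub_zero, Nat.sub_zero, mul_one]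
    have : (0:ℝ) < ((n - 0).choose m : ℝ) := by
      have := Nat.choose_pos (n := n - 0) (k := m) (by omega)
      exact_mod_cast this
    positivity

-- derivative identity
lemma derivative_polR_one (n r : ℕ) (hr : 1 ≤ r) (hrn : r ≤ n) (x : Fin n → ℝ) :
    Polynomial.derivative (polR n r x 1) = (n - r + 1) • polR n (r - 1) x 1 := by
  classical
  rw [polR, map_sum]
  have hfac : ∀ i : Fin n, Polynomial.derivative
      (Polynomial.C (x i) + Polynomial.C ((1 : Fin n → ℝ) i) * Polynomial.X) = 1 := by
    intro i; simp
  have step : ∀ s : Finset (Fin n), Polynomial.derivative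
      (∏ i ∈ s, (Polynomial.C (x i) + Polynomial.C ((1 : Fin n → ℝ) i) * Polynomial.X)) =
      ∑ j ∈ s, ∏ i ∈ s.erase j, (Polynomial.C (x i) + Polynomial.C ((1 : Fin n → ℝ) i) *
        Polynomial.X) := by
    intro s
    have hdp : Polynomial.derivative
        (∏ i ∈ s, (Polynomial.C (x i) + Polynomial.C ((1 : Fin n → ℝ) i) * Polynomial.X)) =
        ∑ j ∈ s, (∏ i ∈ s.erase j, (Polynomial.C (x i) + Polynomial.C ((1 : Fin n → ℝ) i) *
          Polynomial.X)) * Polynomial.derivative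
            (Polynomial.C (x j) + Polynomial.C ((1 : Fin n → ℝ) j) * Polynomial.X) :=
      Polynomial.derivative_prod
    rw [hdp]
    refine Finset.sum_congr rfl fun j _ => ?_
    rw [hfac, mul_one]
  rw [Finset.sum_congr rfl fun s _ => step s]
  rw [Finset.sum_sigma' (powersetCard r (univ : Finset (Fin n))) (fun s => s)
    (fun s j => ∏ i ∈ s.erase j, (Polynomial.C (x i) + Polynomial.C ((1 : Fin n → ℝ) i) *
        Polynomial.X))]
  rw [polR, Finset.smul_sum]
  have rhs : ∀ a ∈ powersetCard (r-1) (univ : Finset (Fin n)),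
      (n - r + 1) • ∏ i ∈ a, (Polynomial.C (x i) + Polynomial.C ((1 : Fin n → ℝ) i) *
        Polynomial.X)
      = ∑ j ∈ aᶜ, ∏ i ∈ a, (Polynomial.C (x i) + Polynomial.C ((1 : Fin n → ℝ) i) *
        Polynomial.X) := by
    intro a ha
    rw [Finset.sum_const]
    rw [Finset.mem_powersetCard] at ha
    rw [Finset.card_compl, ha.2, Fintype.card_fin, show n - (r-1) = n - r + 1 by omega]
  rw [Finset.sum_congr rfl rhs]
  rw [Finset.sum_sigma' (powersetCard (r-1) (univ : Finset (Fin n))) (fun a => aᶜ)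
    (fun a _ => ∏ i ∈ a, (Polynomial.C (x i) + Polynomial.C ((1 : Fin n → ℝ) i) *
        Polynomial.X))]
  refine Finset.sum_nbij' (fun p => ⟨p.1.erase p.2, p.2⟩) (fun p => ⟨insert p.2 p.1, p.2⟩)
    ?_ ?_ ?_ ?_ ?_
  · rintro ⟨s, j⟩ hp
    rw [Finset.mem_sigma, Finset.mem_powersetCard] at hp ⊢
    refine ⟨⟨Finset.subset_univ _, ?_⟩, ?_⟩
    · rw [Finset.card_erase_of_mem hp.2, hp.1.2]
    · simp
  · rintro ⟨a, j⟩ hp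
    rw [Finset.mem_sigma, Finset.mem_powersetCard] at hp ⊢
    have hj : j ∉ a := by simpa using hp.2
    refine ⟨⟨Finset.subset_univ _, ?_⟩, Finset.mem_insert_self _ _⟩
    rw [Finset.card_insert_of_notMem hj, hp.1.2]
    omega
  · rintro ⟨s, j⟩ hp
    rw [Finset.mem_sigma] at hp
    simp only [Sigma.mk.inj_iff, heq_eq_eq, and_true]
    exact Finset.insert_erase hp.2
  · rintro ⟨a, j⟩ hp
    rw [Finset.mem_sigma] at hp
    have hj : j ∉ a := by simpa using hp.2
    simp only [Sigma.mk.inj_iff, heq_eq_eq, and_true]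
    exact Finset.erase_insert hj
  · rintro ⟨s, j⟩ _
    rfl

lemma splits_deriv {p : Polynomial ℝ} (h : p.Splits) :
    (Polynomial.derivative p).Splits := by
  rcases Nat.eq_zero_or_pos p.natDegree with h0 | h0
  · rw [Polynomial.eq_C_of_natDegree_eq_zero h0]
    simp only [Polynomial.derivative_C]
    exact Polynomial.Splits.zero
  · have hc := Polynomial.splits_iff_card_roots.mp h
    have h1 := Polynomial.card_roots_le_derivative p
    have h2 := Polynomial.natDegree_derivative_lt (p := p) (by omega)
    have h3 := Polynomial.card_roots' (Polynomial.derivative p)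
    rw [Polynomial.splits_iff_card_roots]
    omega

lemma splits_of_real_smul {c : ℝ} (hc : c ≠ 0) {p : Polynomial ℝ}
    (h : (c • p).Splits) : p.Splits := by
  rcases eq_or_ne p 0 with rfl | hp
  · exact Polynomial.Splits.zero
  · have : c • p = Polynomial.C c * p := by rw [Polynomial.smul_eq_C_mul]
    rw [this] at h
    have hne : Polynomial.C c * p ≠ 0 := mul_ne_zero (by simpa using hc) hp
    exact h.of_dvd hne (dvd_mul_left p _)

lemma splits_polR_one (n : ℕ) (x : Fin n → ℝ) :
    ∀ d k : ℕ, k + d = n → (polR n k x 1).Splits := by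
  intro d
  induction d with
  | zero =>
    intro k hk
    rw [Nat.add_zero] at hk
    subst hk
    rw [polR]
    have : powersetCard k (univ : Finset (Fin k)) = {univ} := by
      have := Finset.powersetCard_self (univ : Finset (Fin k))
      rwa [Finset.card_univ, Fintype.card_fin] at this
    rw [this, Finset.sum_singleton]
    exact Polynomial.Splits.prod fun i _ =>
      Polynomial.Splits.of_natDegree_le_one (natDegree_lin_le _ _)
  | succ d ih =>
    intro k hk
    have hsp := ih (k+1) (by omega)
    have hder := splits_deriv hsp
    rw [derivative_polR_one n (k+1) (by omega) (by omega) x] at hder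
    have heq : (n - (k+1) + 1 : ℕ) • polR n (k+1-1) x 1
        = ((n - (k+1) + 1 : ℕ) : ℝ) • polR n k x 1 := by
      rw [Nat.add_sub_cancel]
      rw [← Nat.cast_smul_eq_nsmul ℝ]
    rw [heq] at hder
    exact splits_of_real_smul (by positivity) hder

lemma coeff_polR_top (n m : ℕ) (u v : Fin n → ℝ) :
    (polR n m u v).coeff m = esymm n m v := by
  have h := coeff_polC_top n m (fun i => (u i : ℂ)) (fun i => (v i : ℂ))
  rw [← map_polR, Polynomial.coeff_map, Complex.coe_algebraMap, eC_coe] at h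
  exact_mod_cast h

lemma esymm_one (n m : ℕ) : esymm n m (1 : Fin n → ℝ) = (n.choose m : ℝ) := by
  simp [esymm]

-- Claim 1 : no roots off the real axis in the e-direction
lemma eC_shift_I_ne_zero (n k : ℕ) (hk1 : 1 ≤ k) (hkn : k ≤ n) (x : Fin n → ℝ) {s : ℝ}
    (hs : s ≠ 0) : eC n k (fun i => (x i : ℂ) + s * Complex.I) ≠ 0 := by
  intro h0
  set p := polR n k x 1 with hp
  have hmap : (p.map (algebraMap ℝ ℂ)).eval (s * Complex.I)
      = eC n k (fun i => (x i : ℂ) + s * Complex.I) := by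
    rw [map_polR, eval_polC]
    congr 1
    funext i
    simp
  have hpne : p.map (algebraMap ℝ ℂ) ≠ 0 := by
    intro hz
    have h1 : (p.map (algebraMap ℝ ℂ)).coeff k = 0 := by rw [hz]; simp
    rw [Polynomial.coeff_map, hp, coeff_polR_top, esymm_one, Complex.coe_algebraMap] at h1
    have h2 : (n.choose k : ℝ) = 0 := by exact_mod_cast h1
    have h3 : n.choose k = 0 := by exact_mod_cast h2
    have := Nat.choose_pos hkn
    omega
  have hroot : s * Complex.I ∈ (p.map (algebraMap ℝ ℂ)).roots := by
    rw [Polynomial.mem_roots hpne, Polynomial.IsRoot, hmap]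
    exact h0
  rw [(splits_polR_one n x (n - k) k (by omega)).roots_map _] at hroot
  rw [Multiset.mem_map] at hroot
  obtain ⟨r, _, hr⟩ := hroot
  have him : ((algebraMap ℝ ℂ) r).im = (s * Complex.I).im := by rw [hr]
  simp at him
  exact hs him.symm
lemma norm_multiset_prod' (s : Multiset ℂ) : ‖s.prod‖ = (s.map norm).prod := by
  induction s using Multiset.induction_on with
  | empty => simp
  | cons a s ih => simp [norm_mul, ih]

lemma pow_card_le_multiset_prod (m : Multiset ℝ) (c : ℝ) (hc : 0 ≤ c)
    (h : ∀ a ∈ m, c ≤ a) : c ^ (Multiset.card m) ≤ m.prod := by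
  induction m using Multiset.induction_on with
  | empty => simp
  | cons a s ih =>
    rw [Multiset.card_cons, Multiset.prod_cons, pow_succ, mul_comm (c ^ Multiset.card s) c]
    exact mul_le_mul (h a (Multiset.mem_cons_self a s))
      (ih fun b hb => h b (Multiset.mem_cons_of_mem hb)) (pow_nonneg hc _)
      (le_trans hc (h a (Multiset.mem_cons_self a s)))

-- Lemma A : near any point where `p` is small there is a root, quantitatively
lemma exists_root_near {p : Polynomial ℂ} {k : ℕ} (hk : 0 < k) (hdeg : p.natDegree = k)
    (t : ℂ) : ∃ z ∈ p.roots, ‖t - z‖ ^ k ≤ ‖p.eval t‖ / ‖p.leadingCoeff‖ := by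
  have hp : p ≠ 0 := by
    intro h
    rw [h, Polynomial.natDegree_zero] at hdeg
    omega
  have hlead : 0 < ‖p.leadingCoeff‖ := by
    rw [norm_pos_iff]
    exact Polynomial.leadingCoeff_ne_zero.mpr hp
  have hsplit : p.Splits := IsAlgClosed.splits p
  have hcard : Multiset.card p.roots = k := by
    rw [Polynomial.splits_iff_card_roots.mp hsplit, hdeg]
  have heval : ‖p.eval t‖ = ‖p.leadingCoeff‖ * ((p.roots.map (fun z => ‖t - z‖)).prod) := by
    conv_lhs => rw [hsplit.eq_prod_roots]
    rw [Polynomial.eval_mul, Polynomial.eval_C, Polynomial.eval_multiset_prod,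
      Multiset.map_map, norm_mul, norm_multiset_prod', Multiset.map_map]
    congr 1
    exact congrArg Multiset.prod (Multiset.map_congr rfl fun z _ => by simp)
  obtain ⟨z0, hz0⟩ := Multiset.exists_mem_of_ne_zero (by
    intro h
    rw [h] at hcard
    simp at hcard
    omega : p.roots ≠ 0)
  obtain ⟨z, hz, hzmin⟩ := Finset.exists_min_image p.roots.toFinset (fun w => ‖t - w‖)
    ⟨z0, Multiset.mem_toFinset.mpr hz0⟩
  rw [Multiset.mem_toFinset] at hz
  refine ⟨z, hz, ?_⟩
  have hprod : ‖t - z‖ ^ k ≤ (p.roots.map (fun w => ‖t - w‖)).prod := by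
    have := pow_card_le_multiset_prod (p.roots.map (fun w => ‖t - w‖)) ‖t - z‖
      (norm_nonneg _) (by
        intro a ha
        rw [Multiset.mem_map] at ha
        obtain ⟨w, hw, rfl⟩ := ha
        exact hzmin w (Multiset.mem_toFinset.mpr hw))
    rwa [Multiset.card_map, hcard] at this
  rw [heval, mul_comm, mul_div_assoc, div_self (ne_of_gt hlead), mul_one]
  exact hprod

-- Lemma B : root bound
lemma root_norm_le {p : Polynomial ℂ} {z : ℂ} (hp : p ≠ 0) (hz : z ∈ p.roots) :
    ‖z‖ ≤ max 1 ((∑ j ∈ Finset.range p.natDegree, ‖p.coeff j‖) / ‖p.leadingCoeff‖) := by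
  rcases le_or_gt ‖z‖ 1 with h | h
  · exact le_max_of_le_left h
  · refine le_max_of_le_right ?_
    have hlead : 0 < ‖p.leadingCoeff‖ := by
      rw [norm_pos_iff]
      exact Polynomial.leadingCoeff_ne_zero.mpr hp
    have hroot : p.eval z = 0 := Polynomial.isRoot_of_mem_roots hz
    set d := p.natDegree with hd
    have hd1 : 1 ≤ d := by
      by_contra h0
      push_neg at h0
      interval_cases d
      · rw [Polynomial.eq_C_of_natDegree_eq_zero hd.symm, Polynomial.roots_C] at hz
        simp at hz
    have heval := Polynomial.eval_eq_sum_range (p := p) z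
    rw [Finset.sum_range_succ, ← hd] at heval
    have hmain : p.coeff d * z ^ d = -∑ i ∈ Finset.range d, p.coeff i * z ^ i := by
      rw [heval] at hroot
      linear_combination hroot
    have hnorm : ‖p.leadingCoeff‖ * ‖z‖ ^ d ≤
        (∑ j ∈ Finset.range d, ‖p.coeff j‖) * ‖z‖ ^ (d - 1) := by
      have h1 : ‖p.coeff d * z ^ d‖ = ‖p.leadingCoeff‖ * ‖z‖ ^ d := by
        rw [norm_mul, norm_pow]
        rfl
      rw [← h1, hmain, norm_neg]
      refine le_trans (norm_sum_le _ _) ?_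
      rw [Finset.sum_mul]
      refine Finset.sum_le_sum fun i hi => ?_
      rw [Finset.mem_range] at hi
      rw [norm_mul, norm_pow]
      exact mul_le_mul_of_nonneg_left (pow_le_pow_right₀ h.le (by omega))
        (norm_nonneg _)
    have hzpow : ‖z‖ ^ d = ‖z‖ ^ (d - 1) * ‖z‖ := by
      rw [← pow_succ]
      congr 1
      omega
    rw [hzpow, ← mul_assoc] at hnorm
    have hpos : 0 < ‖z‖ ^ (d - 1) := pow_pos (lt_trans one_pos h) _
    have hkey : ‖p.leadingCoeff‖ * ‖z‖ ≤ ∑ j ∈ Finset.range d, ‖p.coeff j‖ := by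
      have h' : (‖p.leadingCoeff‖ * ‖z‖) * ‖z‖ ^ (d-1)
          ≤ (∑ j ∈ Finset.range d, ‖p.coeff j‖) * ‖z‖ ^ (d-1) := by
        calc (‖p.leadingCoeff‖ * ‖z‖) * ‖z‖ ^ (d-1)
            = ‖p.leadingCoeff‖ * ‖z‖ ^ (d-1) * ‖z‖ := by ring
          _ ≤ _ := hnorm
      exact le_of_mul_le_mul_right h' hpos
    rw [le_div_iff₀ hlead]
    linarith [hkey]

-- evaluation difference bound
lemma eval_diff_bound {p q : Polynomial ℂ} {k : ℕ} (hp : p.natDegree ≤ k)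
    (hq : q.natDegree ≤ k) (t : ℂ) :
    ‖p.eval t - q.eval t‖ ≤ (∑ j ∈ Finset.range (k+1), ‖p.coeff j - q.coeff j‖)
      * max 1 ‖t‖ ^ k := by
  rw [Polynomial.eval_eq_sum_range' (Nat.lt_succ_of_le hp) t,
    Polynomial.eval_eq_sum_range' (Nat.lt_succ_of_le hq) t, ← Finset.sum_sub_distrib]
  refine le_trans (norm_sum_le _ _) ?_
  rw [Finset.sum_mul]
  refine Finset.sum_le_sum fun i hi => ?_
  rw [Finset.mem_range] at hi
  rw [← sub_mul, norm_mul, norm_pow]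
  refine mul_le_mul_of_nonneg_left ?_ (norm_nonneg _)
  calc ‖t‖ ^ i ≤ max 1 ‖t‖ ^ i := pow_le_pow_left₀ (norm_nonneg _) (le_max_right _ _) i
    _ ≤ max 1 ‖t‖ ^ k := pow_le_pow_right₀ (le_max_left _ _) (by omega)
set_option maxHeartbeats 1000000 in
-- G2 : roots move continuously (both directions), for families with constant leading coeff
lemma roots_near (P : ℝ → Polynomial ℂ) (k : ℕ) (L : ℂ) (hk : 0 < k) (hL : L ≠ 0)
    (hdeg : ∀ s, (P s).natDegree ≤ k) (hlead : ∀ s, (P s).coeff k = L)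
    (hcont : ∀ j, Continuous fun s => (P s).coeff j) (s₀ : ℝ) {ε : ℝ} (hε : 0 < ε) :
    ∀ᶠ s in nhds s₀,
      (∀ z ∈ (P s).roots, ∃ w ∈ (P s₀).roots, ‖z - w‖ < ε) ∧
      (∀ w ∈ (P s₀).roots, ∃ z ∈ (P s).roots, ‖z - w‖ < ε) := by
  have hdeg' : ∀ s, (P s).natDegree = k := fun s =>
    le_antisymm (hdeg s) (Polynomial.le_natDegree_of_ne_zero (by rw [hlead s]; exact hL))
  have hne : ∀ s, P s ≠ 0 := by
    intro s h0
    have := hdeg' s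
    rw [h0, Polynomial.natDegree_zero] at this
    omega
  have hleadc : ∀ s, (P s).leadingCoeff = L := fun s => by
    rw [Polynomial.leadingCoeff, hdeg' s, hlead s]
  have hLpos : 0 < ‖L‖ := norm_pos_iff.mpr hL
  set g : ℝ → ℝ := fun s => ∑ j ∈ Finset.range k, ‖(P s).coeff j‖ with hg
  have hgc : Continuous g := continuous_finset_sum _ fun j _ => (hcont j).norm
  set R : ℝ := max 1 ((g s₀ + 1) / ‖L‖) with hR
  have hR1 : (1:ℝ) ≤ R := le_max_left _ _
  set Df : ℝ → ℝ := fun s => ∑ j ∈ Finset.range (k+1), ‖(P s).coeff j - (P s₀).coeff j‖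
    with hDf
  have hDfc : Continuous Df :=
    continuous_finset_sum _ fun j _ => ((hcont j).sub continuous_const).norm
  have hDf0 : Df s₀ = 0 := by simp [hDf]
  have hDfnn : ∀ s, 0 ≤ Df s := fun s => Finset.sum_nonneg fun j _ => norm_nonneg _
  set δ : ℝ := ε ^ k * ‖L‖ / R ^ k with hδ
  have hRpos : (0:ℝ) < R := lt_of_lt_of_le one_pos hR1
  have hδpos : 0 < δ := by positivity
  have hU1 : {s : ℝ | g s < g s₀ + 1} ∈ nhds s₀ :=
    (isOpen_lt hgc continuous_const).mem_nhds (by simp)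
  have hU2 : {s : ℝ | Df s < δ} ∈ nhds s₀ :=
    (isOpen_lt hDfc continuous_const).mem_nhds (by simp [hDf0, hδpos])
  have hroot_bound : ∀ s : ℝ, g s < g s₀ + 1 → ∀ z ∈ (P s).roots, ‖z‖ ≤ R := by
    intro s hgs z hz
    refine le_trans (root_norm_le (hne s) hz) ?_
    rw [hdeg' s, hleadc s, hR]
    refine max_le hR1 (le_trans ?_ (le_max_right _ _))
    gcongr
  have harith : ∀ s : ℝ, Df s < δ → Df s * R ^ k / ‖L‖ < ε ^ k := by
    intro s h2
    calc Df s * R ^ k / ‖L‖ < δ * R ^ k / ‖L‖ := by gcongr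
      _ = ε ^ k := by
          rw [hδ, div_mul_cancel₀ _ (by positivity : (R:ℝ) ^ k ≠ 0), mul_div_assoc,
            div_self (ne_of_gt hLpos), mul_one]
  filter_upwards [hU1, hU2] with s h1 h2
  constructor
  · intro z hz
    obtain ⟨w, hw, hb⟩ := exists_root_near hk (hdeg' s₀) z
    refine ⟨w, hw, ?_⟩
    have hz0 : (P s).eval z = 0 := Polynomial.isRoot_of_mem_roots hz
    have hzR : ‖z‖ ≤ R := hroot_bound s h1 z hz
    have heb : ‖(P s₀).eval z‖ ≤ Df s * R ^ k := by
      have h3 : ‖(P s₀).eval z - (P s).eval z‖ ≤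
          (∑ j ∈ Finset.range (k+1), ‖(P s₀).coeff j - (P s).coeff j‖) * max 1 ‖z‖ ^ k :=
        eval_diff_bound (hdeg s₀) (hdeg s) z
      rw [hz0, sub_zero] at h3
      have h4 : (∑ j ∈ Finset.range (k+1), ‖(P s₀).coeff j - (P s).coeff j‖) = Df s :=
        Finset.sum_congr rfl fun j _ => norm_sub_rev _ _
      rw [h4] at h3
      exact le_trans h3 (mul_le_mul (le_refl (Df s))
        (pow_le_pow_left₀ (le_trans zero_le_one (le_max_left _ _)) (max_le hR1 hzR) k)
        (by positivity) (hDfnn s))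
    have hfin : ‖z - w‖ ^ k < ε ^ k := by
      rw [hleadc s₀] at hb
      refine lt_of_le_of_lt (le_trans hb ?_) (harith s h2)
      gcongr
    exact lt_of_pow_lt_pow_left₀ k hε.le hfin
  · intro w hw
    obtain ⟨z, hz, hb⟩ := exists_root_near hk (hdeg' s) w
    refine ⟨z, hz, ?_⟩
    have hw0 : (P s₀).eval w = 0 := Polynomial.isRoot_of_mem_roots hw
    have hwR : ‖w‖ ≤ R := hroot_bound s₀ (by simp) w hw
    have heb : ‖(P s).eval w‖ ≤ Df s * R ^ k := by
      have h3 : ‖(P s).eval w - (P s₀).eval w‖ ≤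
          (∑ j ∈ Finset.range (k+1), ‖(P s).coeff j - (P s₀).coeff j‖) * max 1 ‖w‖ ^ k :=
        eval_diff_bound (hdeg s) (hdeg s₀) w
      rw [hw0, sub_zero] at h3
      exact le_trans h3 (mul_le_mul (le_refl (Df s))
        (pow_le_pow_left₀ (le_trans zero_le_one (le_max_left _ _)) (max_le hR1 hwR) k)
        (by positivity) (hDfnn s))
    have hfin : ‖w - z‖ ^ k < ε ^ k := by
      rw [hleadc s] at hb
      refine lt_of_le_of_lt (le_trans hb ?_) (harith s h2)
      gcongr
    rw [norm_sub_rev]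
    exact lt_of_pow_lt_pow_left₀ k hε.le hfin
-- G3 : a sign of a Lipschitz functional on the roots propagates over a preconnected parameter set
lemma family_sign (P : ℝ → Polynomial ℂ) (k : ℕ) (L : ℂ) (hk : 0 < k) (hL : L ≠ 0)
    (hdeg : ∀ s, (P s).natDegree ≤ k) (hlead : ∀ s, (P s).coeff k = L)
    (hcont : ∀ j, Continuous fun s => (P s).coeff j)
    (D : Set ℝ) (hD : IsPreconnected D)
    (φ : ℂ → ℝ) (hφ : ∀ z w : ℂ, |φ z - φ w| ≤ ‖z - w‖)
    (hno : ∀ s ∈ D, ∀ z ∈ (P s).roots, φ z ≠ 0)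
    {s₀ : ℝ} (hs₀ : s₀ ∈ D) (h₀ : ∀ z ∈ (P s₀).roots, φ z < 0) :
    ∀ s ∈ D, ∀ z ∈ (P s).roots, φ z < 0 := by
  have hdeg' : ∀ s, (P s).natDegree = k := fun s =>
    le_antisymm (hdeg s) (Polynomial.le_natDegree_of_ne_zero (by rw [hlead s]; exact hL))
  have hne : ∀ s, P s ≠ 0 := by
    intro s h0
    have := hdeg' s
    rw [h0, Polynomial.natDegree_zero] at this
    omega
  have hroots_ne : ∀ s : ℝ, (P s).roots.toFinset.Nonempty := by
    intro s
    have hcard : Multiset.card (P s).roots = k := by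
      rw [Polynomial.splits_iff_card_roots.mp (IsAlgClosed.splits (P s)), hdeg' s]
    obtain ⟨z, hz⟩ := Multiset.exists_mem_of_ne_zero (by
      intro h0
      rw [h0] at hcard
      simp at hcard
      omega : (P s).roots ≠ 0)
    exact ⟨z, Multiset.mem_toFinset.mpr hz⟩
  set SA : Set ℝ := {s : ℝ | ∀ z ∈ (P s).roots, φ z < 0} with hSA
  set SB : Set ℝ := {s : ℝ | ∃ z ∈ (P s).roots, 0 < φ z} with hSB
  -- relative openness of SA
  have hAopen : ∀ s1 ∈ SA, SA ∈ nhds s1 := by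
    intro s1 hs1
    obtain ⟨zm, hzm, hzmin⟩ := Finset.exists_min_image (P s1).roots.toFinset
      (fun z => -(φ z)) (hroots_ne s1)
    rw [Multiset.mem_toFinset] at hzm
    set c : ℝ := -(φ zm) with hc
    have hcpos : 0 < c := by
      rw [hc]
      have := hs1 zm hzm
      linarith
    have hev := roots_near P k L hk hL hdeg hlead hcont s1 (ε := c/2) (by positivity)
    refine Filter.mem_of_superset hev ?_
    intro s' hs'
    intro z hz
    obtain ⟨w, hw, hwb⟩ := hs'.1 z hz
    have h1 : φ w ≤ -c := by
      have := hzmin w (Multiset.mem_toFinset.mpr hw)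
      rw [hc]
      linarith
    have h2 : |φ z - φ w| ≤ ‖z - w‖ := hφ z w
    have := abs_le.mp (le_trans h2 hwb.le) |>.2
    linarith
  -- relative openness of SB
  have hBopen : ∀ s1 ∈ SB, SB ∈ nhds s1 := by
    intro s1 hs1
    obtain ⟨z1, hz1, hz1pos⟩ := hs1
    have hev := roots_near P k L hk hL hdeg hlead hcont s1 (ε := (φ z1)/2) (by positivity)
    refine Filter.mem_of_superset hev ?_
    intro s' hs'
    obtain ⟨z, hz, hzb⟩ := hs'.2 z1 hz1
    refine ⟨z, hz, ?_⟩
    have h2 : |φ z - φ z1| ≤ ‖z - z1‖ := hφ z z1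
    have := abs_le.mp (le_trans h2 hzb.le) |>.1
    linarith
  -- conclude via preconnectedness
  by_contra hcontra
  push_neg at hcontra
  obtain ⟨sb, hsb, zb, hzb, hzbpos⟩ := hcontra
  have hsbB : sb ∈ SB := ⟨zb, hzb, lt_of_le_of_ne hzbpos (Ne.symm (hno sb hsb zb hzb))⟩
  have hcover : D ⊆ interior SA ∪ interior SB := by
    intro s hs
    rcases Classical.em (∀ z ∈ (P s).roots, φ z < 0) with h | h
    · exact Or.inl (mem_interior_iff_mem_nhds.mpr (hAopen s h))
    · push_neg at h
      obtain ⟨z, hz, hzge⟩ := h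
      exact Or.inr (mem_interior_iff_mem_nhds.mpr
        (hBopen s ⟨z, hz, lt_of_le_of_ne hzge (Ne.symm (hno s hs z hz))⟩))
  obtain ⟨x, hxD, hxAB⟩ := hD (interior SA) (interior SB) isOpen_interior isOpen_interior
    hcover ⟨s₀, hs₀, mem_interior_iff_mem_nhds.mpr (hAopen s₀ h₀)⟩
    ⟨sb, hsb, mem_interior_iff_mem_nhds.mpr (hBopen sb hsbB)⟩
  have hxA : x ∈ SA := interior_subset hxAB.1
  have hxB : x ∈ SB := interior_subset hxAB.2
  obtain ⟨z, hz, hzpos⟩ := hxB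
  exact absurd (hxA z hz) (by linarith)
lemma coeff_polC_formula (n m : ℕ) (u v : Fin n → ℂ) (j : ℕ) :
    (polC n m u v).coeff j = ∑ s ∈ powersetCard m (univ : Finset (Fin n)), ∑ a ∈ s.powerset,
      (if (s \ a).card = j then (∏ i ∈ a, u i) * ∏ i ∈ s \ a, v i else 0) := by
  rw [polC, Polynomial.finset_sum_coeff]
  refine Finset.sum_congr rfl fun s _ => ?_
  rw [Finset.prod_add, Polynomial.finset_sum_coeff]
  refine Finset.sum_congr rfl fun a _ => ?_
  have hx : (∏ i ∈ a, Polynomial.C (u i)) * ∏ i ∈ s \ a, (Polynomial.C (v i) * Polynomial.X)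
      = Polynomial.C ((∏ i ∈ a, u i) * ∏ i ∈ s \ a, v i) * Polynomial.X ^ (s \ a).card := by
    have hCu : Polynomial.C (∏ i ∈ a, u i) = ∏ i ∈ a, Polynomial.C (u i) :=
      map_prod Polynomial.C.toMonoidHom u a
    have hCv : Polynomial.C (∏ i ∈ s \ a, v i) = ∏ i ∈ s \ a, Polynomial.C (v i) :=
      map_prod Polynomial.C.toMonoidHom v (s \ a)
    rw [Finset.prod_mul_distrib, Finset.prod_const, map_mul, hCu, hCv]
    ring
  rw [hx, Polynomial.coeff_C_mul, Polynomial.coeff_X_pow]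
  rcases eq_or_ne (s \ a).card j with h | h
  · rw [if_pos h, if_pos h.symm, mul_one]
  · rw [if_neg h, if_neg (Ne.symm h), mul_zero]

lemma continuous_coeff_polC (n m : ℕ) (B : Fin n → ℂ) (A : ℝ → (Fin n → ℂ))
    (hA : ∀ i, Continuous fun t => A t i) (j : ℕ) :
    Continuous fun t => (polC n m (A t) B).coeff j := by
  simp only [coeff_polC_formula]
  refine continuous_finset_sum _ fun s _ => continuous_finset_sum _ fun a _ => ?_
  rcases eq_or_ne (s \ a).card j with h | h
  · simp only [h, if_true]
    exact (continuous_finset_prod _ fun i _ => hA i).mul continuous_const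
  · simp only [h, if_false]
    exact continuous_const

lemma eC_mul_left (n m : ℕ) (c : ℂ) (w : Fin n → ℂ) :
    eC n m (fun i => c * w i) = c ^ m * eC n m w := by
  have := eC_smul n m c w
  rwa [Pi.smul_def] at this

lemma esymm_mul_left (n m : ℕ) (c : ℝ) (w : Fin n → ℝ) :
    esymm n m (fun i => c * w i) = c ^ m * esymm n m w := by
  have := esymm_smul n m c w
  rwa [Pi.smul_def] at this

lemma eventually_all_roots_neg (P : ℝ → Polynomial ℂ) (k : ℕ) (L : ℂ) (hk : 0 < k)
    (hL : L ≠ 0) (hdeg : ∀ s, (P s).natDegree ≤ k) (hlead : ∀ s, (P s).coeff k = L)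
    (hcont : ∀ j, Continuous fun s => (P s).coeff j)
    (φ : ℂ → ℝ) (hφ : ∀ z w : ℂ, |φ z - φ w| ≤ ‖z - w‖)
    (s1 : ℝ) (h1 : ∀ z ∈ (P s1).roots, φ z < 0) :
    ∀ᶠ s in nhds s1, ∀ z ∈ (P s).roots, φ z < 0 := by
  have hdeg' : (P s1).natDegree = k :=
    le_antisymm (hdeg s1) (Polynomial.le_natDegree_of_ne_zero (by rw [hlead s1]; exact hL))
  have hroots_ne : (P s1).roots.toFinset.Nonempty := by
    have hcard : Multiset.card (P s1).roots = k := by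
      rw [Polynomial.splits_iff_card_roots.mp (IsAlgClosed.splits (P s1)), hdeg']
    obtain ⟨z, hz⟩ := Multiset.exists_mem_of_ne_zero (by
      intro h0
      rw [h0] at hcard
      simp at hcard
      omega : (P s1).roots ≠ 0)
    exact ⟨z, Multiset.mem_toFinset.mpr hz⟩
  obtain ⟨zm, hzm, hzmin⟩ := Finset.exists_min_image (P s1).roots.toFinset
    (fun z => -(φ z)) hroots_ne
  rw [Multiset.mem_toFinset] at hzm
  have hcpos : 0 < -(φ zm) := by
    have := h1 zm hzm
    linarith
  have hev := roots_near P k L hk hL hdeg hlead hcont s1 (ε := (-(φ zm))/2) (by positivity)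
  refine Filter.mem_of_superset hev ?_
  intro s' hs' z hz
  obtain ⟨w, hw, hwb⟩ := hs'.1 z hz
  have h1' : φ w ≤ φ zm := by
    have := hzmin w (Multiset.mem_toFinset.mpr hw)
    linarith
  have h2 := abs_le.mp (le_trans (hφ z w) hwb.le) |>.2
  linarith
lemma im_lip : ∀ z w : ℂ, |z.im - w.im| ≤ ‖z - w‖ := fun z w => by
  rw [← Complex.sub_im]
  exact Complex.abs_im_le_norm _

lemma re_lip : ∀ z w : ℂ, |z.re - w.re| ≤ ‖z - w‖ := fun z w => by
  rw [← Complex.sub_re]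
  exact Complex.abs_re_le_norm _

-- the leading coefficient of all our families
lemma L_ne_zero (n k : ℕ) (hk1 : 1 ≤ k) {v : Fin n → ℝ} (hv : v ∈ GS n k) :
    eC n k (fun i => (v i : ℂ)) ≠ 0 := by
  rw [eC_coe]
  exact_mod_cast ne_of_gt (hv k hk1 le_rfl)

-- negativity of real roots of the polR-v-one polynomial
lemma polR_one_root_neg (n k : ℕ) (hk1 : 1 ≤ k) (hkn : k ≤ n) {v : Fin n → ℝ}
    (hv : v ∈ GS n k) {c : ℝ} (hc : (polR n k v 1).eval c = 0) : c < 0 := by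
  by_contra h
  push_neg at h
  have := shift_mem_GS hk1 hkn hv h k hk1 le_rfl
  rw [eval_polR] at hc
  have he : esymm n k (fun i => v i + c * (1 : Fin n → ℝ) i) = esymm n k (fun i => v i + c) := by
    exact congrArg _ (funext fun i => by simp)
  rw [he] at hc
  rw [hc] at this
  exact lt_irrefl 0 this

-- complex roots of `t ↦ eC (v + t·1)` are real negative
lemma polC_one_root (n k : ℕ) (hk1 : 1 ≤ k) (hkn : k ≤ n) {v : Fin n → ℝ}
    (hv : v ∈ GS n k) {ζ : ℂ} (hζ : eC n k (fun i => (v i : ℂ) + ζ) = 0) :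
    ∃ c : ℝ, c < 0 ∧ ζ = (c : ℂ) := by
  classical
  set p := polR n k v 1 with hp
  have hmapeval : (p.map (algebraMap ℝ ℂ)).eval ζ = eC n k (fun i => (v i : ℂ) + ζ) := by
    rw [hp, map_polR, eval_polC]
    exact congrArg _ (funext fun i => by simp)
  have hpne : p.map (algebraMap ℝ ℂ) ≠ 0 := by
    intro hz
    have h1 : (p.map (algebraMap ℝ ℂ)).coeff k = 0 := by rw [hz]; simp
    rw [Polynomial.coeff_map, hp, coeff_polR_top, esymm_one, Complex.coe_algebraMap] at h1
    have h2 : (n.choose k : ℝ) = 0 := by exact_mod_cast h1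
    have h3 : n.choose k = 0 := by exact_mod_cast h2
    have := Nat.choose_pos hkn
    omega
  have hroot : ζ ∈ (p.map (algebraMap ℝ ℂ)).roots := by
    rw [Polynomial.mem_roots hpne, Polynomial.IsRoot, hmapeval]
    exact hζ
  rw [(splits_polR_one n v (n - k) k (by omega)).roots_map _, Multiset.mem_map]
    at hroot
  obtain ⟨c, hcmem, hc⟩ := hroot
  have hceval : p.eval c = 0 := Polynomial.isRoot_of_mem_roots hcmem
  exact ⟨c, polR_one_root_neg n k hk1 hkn hv hceval, by rw [← hc]; simp⟩

lemma eC_one_ne (n k : ℕ) (hkn : k ≤ n) : eC n k (fun _ : Fin n => (1:ℂ)) ≠ 0 := by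
  have : eC n k (fun _ : Fin n => (1:ℂ)) = ((n.choose k : ℝ) : ℂ) := by
    rw [show (fun _ : Fin n => (1:ℂ)) = (fun i : Fin n => (((1 : Fin n → ℝ) i : ℝ) : ℂ)) by
      funext i; simp, eC_coe, esymm_one]
  rw [this]
  have := Nat.choose_pos hkn
  simp
  omega

set_option maxHeartbeats 1000000 in
lemma roots_im_neg (n k : ℕ) (hk1 : 1 ≤ k) (hkn : k ≤ n) (u v : Fin n → ℝ) (hv : v ∈ GS n k)
    {s : ℝ} (hs : 0 < s) {t : ℂ}
    (ht : eC n k (fun i => (u i : ℂ) + t * v i + s * Complex.I) = 0) : t.im < 0 := by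
  classical
  have hk' : 0 < k := hk1
  set L : ℂ := eC n k (fun i => (v i : ℂ)) with hLdef
  have hL : L ≠ 0 := L_ne_zero n k hk1 hv
  set Q : ℝ → Polynomial ℂ := fun σ => polC n k (fun i => (u i : ℂ) + σ * Complex.I)
    (fun i => (v i : ℂ)) with hQdef
  have hdeg : ∀ σ, (Q σ).natDegree ≤ k := fun σ => natDegree_polC_le n k _ _
  have hlead : ∀ σ, (Q σ).coeff k = L := fun σ => coeff_polC_top n k _ _
  have hcont : ∀ j, Continuous fun σ => (Q σ).coeff j := fun j =>
    continuous_coeff_polC n k _ _ (fun i => continuous_const.add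
      ((Complex.continuous_ofReal).mul continuous_const)) j
  have hQne : ∀ σ, Q σ ≠ 0 := fun σ h0 => hL (by rw [← hlead σ, h0]; simp)
  have hevalQ : ∀ (σ : ℝ) (z : ℂ),
      (Q σ).eval z = eC n k (fun i => (u i : ℂ) + z * v i + σ * Complex.I) := by
    intro σ z
    rw [hQdef, eval_polC]
    exact congrArg (eC n k) (funext fun i => by ring)
  have hno : ∀ σ ∈ Set.Ioi (0:ℝ), ∀ z ∈ (Q σ).roots, z.im ≠ 0 := by
    intro σ hσ z hz h0
    have hzr : z = (z.re : ℂ) := Complex.ext rfl (by simp [h0])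
    have he : (Q σ).eval z = 0 := Polynomial.isRoot_of_mem_roots hz
    rw [hevalQ σ z, hzr] at he
    refine eC_shift_I_ne_zero n k hk1 hkn (fun i => u i + z.re * v i)
      (ne_of_gt (Set.mem_Ioi.mp hσ)) ?_
    rw [← he]
    exact congrArg (eC n k) (funext fun i => by push_cast; ring)
  -- second family for the large-parameter analysis
  set Q2 : ℝ → Polynomial ℂ := fun ρ => polC n k (fun i => (ρ : ℂ) * u i + Complex.I)
    (fun i => (v i : ℂ)) with hQ2def
  have hdeg2 : ∀ ρ, (Q2 ρ).natDegree ≤ k := fun ρ => natDegree_polC_le n k _ _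
  have hlead2 : ∀ ρ, (Q2 ρ).coeff k = L := fun ρ => coeff_polC_top n k _ _
  have hcont2 : ∀ j, Continuous fun ρ => (Q2 ρ).coeff j := fun j =>
    continuous_coeff_polC n k _ _ (fun i =>
      ((Complex.continuous_ofReal).mul continuous_const).add continuous_const) j
  have hQ2ne : ∀ ρ, Q2 ρ ≠ 0 := fun ρ h0 => hL (by rw [← hlead2 ρ, h0]; simp)
  have hevalQ2 : ∀ (ρ : ℝ) (w : ℂ),
      (Q2 ρ).eval w = eC n k (fun i => (ρ : ℂ) * u i + Complex.I + w * v i) := by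
    intro ρ w
    rw [hQ2def, eval_polC]
  have h0₂ : ∀ w ∈ (Q2 0).roots, w.im < 0 := by
    intro w hw
    have he : (Q2 0).eval w = 0 := Polynomial.isRoot_of_mem_roots hw
    rw [hevalQ2] at he
    have he' : eC n k (fun i => Complex.I + w * v i) = 0 := by
      rw [← he]
      exact congrArg (eC n k) (funext fun i => by push_cast; ring)
    have hw0 : w ≠ 0 := by
      intro h0
      rw [h0] at he'
      have : eC n k (fun i : Fin n => Complex.I + 0 * v i) =
          Complex.I ^ k * eC n k (fun _ : Fin n => (1:ℂ)) := by
        rw [← eC_mul_left]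
        exact congrArg (eC n k) (funext fun i => by ring)
      rw [this] at he'
      exact (mul_ne_zero (pow_ne_zero k Complex.I_ne_zero) (eC_one_ne n k hkn)) he'
    have hfac : eC n k (fun i => Complex.I + w * v i)
        = w ^ k * eC n k (fun i => (v i : ℂ) + Complex.I / w) := by
      rw [← eC_mul_left]
      refine congrArg (eC n k) (funext fun i => ?_)
      field_simp
      ring
    rw [hfac] at he'
    have hz : eC n k (fun i => (v i : ℂ) + Complex.I / w) = 0 :=
      (mul_eq_zero.mp he').resolve_left (pow_ne_zero k hw0)
    obtain ⟨c, hcneg, hc⟩ := polC_one_root n k hk1 hkn hv hz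
    have hcne : (c : ℂ) ≠ 0 := by
      simp only [ne_eq, Complex.ofReal_eq_zero]
      linarith
    have hw_eq : w = Complex.I * (c : ℂ)⁻¹ := by
      field_simp at hc
      rw [← div_eq_mul_inv, eq_div_iff hcne]
      linear_combination -hc
    rw [hw_eq, ← Complex.ofReal_inv]
    simp only [Complex.mul_im, Complex.I_re, Complex.ofReal_re, Complex.I_im,
      Complex.ofReal_im, zero_mul, one_mul, mul_zero, add_zero, zero_add]
    exact inv_lt_zero.mpr hcneg
  -- produce a good parameter σ₀
  have hev := eventually_all_roots_neg Q2 k L hk' hL hdeg2 hlead2 hcont2 Complex.im im_lip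
    0 h0₂
  rw [Metric.eventually_nhds_iff] at hev
  obtain ⟨δ, hδ, hball⟩ := hev
  set ρ₀ : ℝ := δ/2 with hρ₀
  have hρ₀pos : 0 < ρ₀ := by positivity
  have hQ2ρ₀ : ∀ w ∈ (Q2 ρ₀).roots, w.im < 0 := hball (by
    rw [Real.dist_eq, sub_zero, abs_of_pos hρ₀pos]
    rw [hρ₀]
    linarith)
  set σ₀ : ℝ := ρ₀⁻¹ with hσ₀
  have hσ₀pos : 0 < σ₀ := by positivity
  have hρσ : (σ₀ : ℂ) * (ρ₀ : ℂ) = 1 := by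
    rw [← Complex.ofReal_mul, hσ₀, inv_mul_cancel₀ (ne_of_gt hρ₀pos)]
    simp
  have h₀ : ∀ z ∈ (Q σ₀).roots, z.im < 0 := by
    intro z hz
    have he : (Q σ₀).eval z = 0 := Polynomial.isRoot_of_mem_roots hz
    rw [hevalQ σ₀ z] at he
    have hscale : eC n k (fun i => (u i : ℂ) + z * v i + σ₀ * Complex.I)
        = (σ₀ : ℂ) ^ k * eC n k (fun i => (ρ₀ : ℂ) * u i + Complex.I + (z * ρ₀) * v i) := by
      rw [← eC_mul_left]
      refine congrArg (eC n k) (funext fun i => ?_)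
      linear_combination (-((u i : ℂ)) - z * (v i : ℂ)) * hρσ
    rw [hscale] at he
    have hσ₀ne : (σ₀ : ℂ) ≠ 0 := by
      simp only [ne_eq, Complex.ofReal_eq_zero]
      linarith
    have he2 : eC n k (fun i => (ρ₀ : ℂ) * u i + Complex.I + (z * ρ₀) * v i) = 0 :=
      (mul_eq_zero.mp he).resolve_left (pow_ne_zero k hσ₀ne)
    have hmem : z * (ρ₀ : ℂ) ∈ (Q2 ρ₀).roots := by
      rw [Polynomial.mem_roots (hQ2ne ρ₀), Polynomial.IsRoot, hevalQ2]
      exact he2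
    have him := hQ2ρ₀ _ hmem
    have him2 : (z * (ρ₀ : ℂ)).im = z.im * ρ₀ := by
      simp [Complex.mul_im]
    rw [him2] at him
    nlinarith
  have hfam := family_sign Q k L hk' hL hdeg hlead hcont (Set.Ioi 0) isPreconnected_Ioi
    Complex.im im_lip hno (Set.mem_Ioi.mpr hσ₀pos) h₀
  refine hfam s (Set.mem_Ioi.mpr hs) t ?_
  rw [Polynomial.mem_roots (hQne s), Polynomial.IsRoot, hevalQ]
  exact ht
set_option maxHeartbeats 1000000 in
lemma roots_real (n k : ℕ) (hk1 : 1 ≤ k) (hkn : k ≤ n) (u v : Fin n → ℝ) (hv : v ∈ GS n k)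
    {t : ℂ} (ht : eC n k (fun i => (u i : ℂ) + t * v i) = 0) : t.im = 0 := by
  classical
  have hk' : 0 < k := hk1
  set L : ℂ := eC n k (fun i => (v i : ℂ)) with hLdef
  have hL : L ≠ 0 := L_ne_zero n k hk1 hv
  by_contra hne
  have hconj : eC n k (fun i => (u i : ℂ) + (starRingEnd ℂ t) * v i) = 0 := by
    have h := congrArg (starRingEnd ℂ) ht
    rw [map_zero] at h
    rw [← h, eC, eC, map_sum]
    refine Finset.sum_congr rfl fun s _ => ?_
    rw [map_prod]
    refine Finset.prod_congr rfl fun i _ => ?_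
    rw [map_add, map_mul, Complex.conj_ofReal, Complex.conj_ofReal]
  obtain ⟨τ, hτpos, hτroot⟩ : ∃ τ : ℂ, 0 < τ.im ∧
      eC n k (fun i => (u i : ℂ) + τ * v i) = 0 := by
    rcases lt_or_gt_of_ne hne with h | h
    · refine ⟨(starRingEnd ℂ) t, ?_, hconj⟩
      rw [Complex.conj_im]
      linarith
    · exact ⟨t, h, ht⟩
  set Q : ℝ → Polynomial ℂ := fun σ => polC n k (fun i => (u i : ℂ) + σ * Complex.I)
    (fun i => (v i : ℂ)) with hQdef
  have hdeg : ∀ σ, (Q σ).natDegree ≤ k := fun σ => natDegree_polC_le n k _ _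
  have hlead : ∀ σ, (Q σ).coeff k = L := fun σ => coeff_polC_top n k _ _
  have hcont : ∀ j, Continuous fun σ => (Q σ).coeff j := fun j =>
    continuous_coeff_polC n k _ _ (fun i => continuous_const.add
      ((Complex.continuous_ofReal).mul continuous_const)) j
  have hQne : ∀ σ, Q σ ≠ 0 := fun σ h0 => hL (by rw [← hlead σ, h0]; simp)
  have hevalQ : ∀ (σ : ℝ) (z : ℂ),
      (Q σ).eval z = eC n k (fun i => (u i : ℂ) + z * v i + σ * Complex.I) := by
    intro σ z
    rw [hQdef, eval_polC]
    exact congrArg (eC n k) (funext fun i => by ring)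
  have hτmem : τ ∈ (Q 0).roots := by
    rw [Polynomial.mem_roots (hQne 0), Polynomial.IsRoot, hevalQ]
    rw [← hτroot]
    exact congrArg (eC n k) (funext fun i => by push_cast; ring)
  have hev := roots_near Q k L hk' hL hdeg hlead hcont 0 (ε := τ.im/2) (by positivity)
  rw [Metric.eventually_nhds_iff] at hev
  obtain ⟨δ, hδ, hball⟩ := hev
  set s : ℝ := δ/2 with hsdef
  have hspos : 0 < s := by positivity
  obtain ⟨z, hz, hzb⟩ := (hball (y := s) (by
    rw [Real.dist_eq, sub_zero, abs_of_pos hspos, hsdef]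
    linarith)).2 τ hτmem
  have hzim : 0 < z.im := by
    have := abs_le.mp (le_trans (im_lip z τ) hzb.le) |>.1
    linarith
  have hzroot : eC n k (fun i => (u i : ℂ) + z * v i + s * Complex.I) = 0 := by
    rw [← hevalQ]
    exact Polynomial.isRoot_of_mem_roots hz
  have := roots_im_neg n k hk1 hkn u v hv hspos hzroot
  linarith

set_option maxHeartbeats 1000000 in
lemma key_pos (n k : ℕ) (hk1 : 1 ≤ k) (hkn : k ≤ n) {u v : Fin n → ℝ}
    (hu : u ∈ GS n k) (hv : v ∈ GS n k) {c : ℝ} (hc : 0 ≤ c) :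
    0 < esymm n k (fun i => u i + c * v i) := by
  classical
  have hk' : 0 < k := hk1
  set L : ℂ := eC n k (fun i => (v i : ℂ)) with hLdef
  have hL : L ≠ 0 := L_ne_zero n k hk1 hv
  set Q3 : ℝ → Polynomial ℂ := fun r => polC n k (fun i => (u i : ℂ) + (r : ℂ))
    (fun i => (v i : ℂ)) with hQ3def
  have hdeg : ∀ r, (Q3 r).natDegree ≤ k := fun r => natDegree_polC_le n k _ _
  have hlead : ∀ r, (Q3 r).coeff k = L := fun r => coeff_polC_top n k _ _
  have hcont : ∀ j, Continuous fun r => (Q3 r).coeff j := fun j =>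
    continuous_coeff_polC n k _ _ (fun i => continuous_const.add
      Complex.continuous_ofReal) j
  have hQ3ne : ∀ r, Q3 r ≠ 0 := fun r h0 => hL (by rw [← hlead r, h0]; simp)
  have hevalQ3 : ∀ (r : ℝ) (z : ℂ),
      (Q3 r).eval z = eC n k (fun i => ((u i : ℂ) + (r:ℂ)) + z * v i) := fun r z => by
    rw [hQ3def, eval_polC]
  -- no purely imaginary/zero-real roots on Ici 0
  have hno : ∀ r ∈ Set.Ici (0:ℝ), ∀ z ∈ (Q3 r).roots, z.re ≠ 0 := by
    intro r hr z hz h0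
    have he : (Q3 r).eval z = 0 := Polynomial.isRoot_of_mem_roots hz
    rw [hevalQ3] at he
    have he' : eC n k (fun i => ((fun j => u j + r) i : ℂ) + z * v i) = 0 := by
      rw [← he]
      exact congrArg (eC n k) (funext fun i => by push_cast; ring)
    have him : z.im = 0 := roots_real n k hk1 hkn (fun j => u j + r) v hv he'
    have hz0 : z = 0 := Complex.ext h0 him
    rw [hz0] at he
    have hshift : (fun i => u i + r) ∈ GS n k := shift_mem_GS hk1 hkn hu (Set.mem_Ici.mp hr)
    have hpos := hshift k hk1 le_rfl
    have : eC n k (fun i => ((u i : ℂ) + (r:ℂ)) + 0 * v i)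
        = ((esymm n k (fun i => u i + r) : ℝ) : ℂ) := by
      rw [← eC_coe]
      exact congrArg (eC n k) (funext fun i => by push_cast; ring)
    rw [this] at he
    rw [Complex.ofReal_eq_zero] at he
    linarith
  -- positivity at a large parameter
  set Q4 : ℝ → Polynomial ℂ := fun ρ => polC n k (fun i => (ρ : ℂ) * u i + 1)
    (fun i => (v i : ℂ)) with hQ4def
  have hdeg4 : ∀ ρ, (Q4 ρ).natDegree ≤ k := fun ρ => natDegree_polC_le n k _ _
  have hlead4 : ∀ ρ, (Q4 ρ).coeff k = L := fun ρ => coeff_polC_top n k _ _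
  have hcont4 : ∀ j, Continuous fun ρ => (Q4 ρ).coeff j := fun j =>
    continuous_coeff_polC n k _ _ (fun i =>
      ((Complex.continuous_ofReal).mul continuous_const).add continuous_const) j
  have hQ4ne : ∀ ρ, Q4 ρ ≠ 0 := fun ρ h0 => hL (by rw [← hlead4 ρ, h0]; simp)
  have hevalQ4 : ∀ (ρ : ℝ) (w : ℂ),
      (Q4 ρ).eval w = eC n k (fun i => ((ρ:ℂ) * u i + 1) + w * v i) := fun ρ w => by
    rw [hQ4def, eval_polC]
  have h0₄ : ∀ w ∈ (Q4 0).roots, w.re < 0 := by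
    intro w hw
    have he : (Q4 0).eval w = 0 := Polynomial.isRoot_of_mem_roots hw
    rw [hevalQ4] at he
    have he' : eC n k (fun i => 1 + w * v i) = 0 := by
      rw [← he]
      exact congrArg (eC n k) (funext fun i => by push_cast; ring)
    have hw0 : w ≠ 0 := by
      intro h0
      rw [h0] at he'
      have : eC n k (fun i : Fin n => 1 + 0 * v i) = eC n k (fun _ : Fin n => (1:ℂ)) :=
        congrArg (eC n k) (funext fun i => by ring)
      rw [this] at he'
      exact eC_one_ne n k hkn he'
    have hfac : eC n k (fun i => 1 + w * v i)
        = w ^ k * eC n k (fun i => (v i : ℂ) + w⁻¹) := by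
      rw [← eC_mul_left]
      refine congrArg (eC n k) (funext fun i => ?_)
      field_simp
      ring
    rw [hfac] at he'
    have hz : eC n k (fun i => (v i : ℂ) + w⁻¹) = 0 :=
      (mul_eq_zero.mp he').resolve_left (pow_ne_zero k hw0)
    obtain ⟨cc, hccneg, hcc⟩ := polC_one_root n k hk1 hkn hv hz
    have hccne : (cc : ℂ) ≠ 0 := by
      simp only [ne_eq, Complex.ofReal_eq_zero]
      linarith
    have hw_eq : w = ((cc⁻¹ : ℝ) : ℂ) := by
      rw [Complex.ofReal_inv, ← hcc]
      rw [inv_inv]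
    rw [hw_eq, Complex.ofReal_re]
    exact inv_lt_zero.mpr hccneg
  have hev := eventually_all_roots_neg Q4 k L hk' hL hdeg4 hlead4 hcont4 Complex.re re_lip
    0 h0₄
  rw [Metric.eventually_nhds_iff] at hev
  obtain ⟨δ, hδ, hball⟩ := hev
  set ρ₀ : ℝ := δ/2 with hρ₀
  have hρ₀pos : 0 < ρ₀ := by positivity
  have hQ4ρ₀ : ∀ w ∈ (Q4 ρ₀).roots, w.re < 0 := hball (by
    rw [Real.dist_eq, sub_zero, abs_of_pos hρ₀pos, hρ₀]
    linarith)
  set r₀ : ℝ := ρ₀⁻¹ with hr₀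
  have hr₀pos : 0 < r₀ := by positivity
  have hρσ : (r₀ : ℂ) * (ρ₀ : ℂ) = 1 := by
    rw [← Complex.ofReal_mul, hr₀, inv_mul_cancel₀ (ne_of_gt hρ₀pos)]
    simp
  have h₀ : ∀ z ∈ (Q3 r₀).roots, z.re < 0 := by
    intro z hz
    have he : (Q3 r₀).eval z = 0 := Polynomial.isRoot_of_mem_roots hz
    rw [hevalQ3] at he
    have hscale : eC n k (fun i => ((u i : ℂ) + (r₀:ℂ)) + z * v i)
        = (r₀ : ℂ) ^ k * eC n k (fun i => ((ρ₀ : ℂ) * u i + 1) + (z * ρ₀) * v i) := by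
      rw [← eC_mul_left]
      refine congrArg (eC n k) (funext fun i => ?_)
      linear_combination (-((u i : ℂ)) - z * (v i : ℂ) - (r₀:ℂ)) * hρσ + (r₀:ℂ) * hρσ
    rw [hscale] at he
    have hr₀ne : (r₀ : ℂ) ≠ 0 := by
      simp only [ne_eq, Complex.ofReal_eq_zero]
      linarith
    have he2 := (mul_eq_zero.mp he).resolve_left (pow_ne_zero k hr₀ne)
    have hmem : z * (ρ₀ : ℂ) ∈ (Q4 ρ₀).roots := by
      rw [Polynomial.mem_roots (hQ4ne ρ₀), Polynomial.IsRoot, hevalQ4]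
      exact he2
    have hre := hQ4ρ₀ _ hmem
    have hre2 : (z * (ρ₀ : ℂ)).re = z.re * ρ₀ := by
      simp [Complex.mul_re]
    rw [hre2] at hre
    nlinarith
  have hfam := family_sign Q3 k L hk' hL hdeg hlead hcont (Set.Ici 0) isPreconnected_Ici
    Complex.re re_lip hno (Set.mem_Ici.mpr hr₀pos.le) h₀
  -- no nonnegative real c gives a zero
  have hnonzero : ∀ c' : ℝ, 0 ≤ c' → esymm n k (fun i => u i + c' * v i) ≠ 0 := by
    intro c' hc' h0
    have hmem : (c' : ℂ) ∈ (Q3 0).roots := by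
      rw [Polynomial.mem_roots (hQ3ne 0), Polynomial.IsRoot, hevalQ3]
      have : eC n k (fun i => ((u i : ℂ) + ((0:ℝ):ℂ)) + (c' : ℂ) * v i)
          = ((esymm n k (fun i => u i + c' * v i) : ℝ) : ℂ) := by
        rw [← eC_coe]
        exact congrArg (eC n k) (funext fun i => by push_cast; ring)
      rw [this, h0]
      simp
    have := hfam 0 (Set.mem_Ici.mpr le_rfl) _ hmem
    rw [Complex.ofReal_re] at this
    linarith
  -- continuity and IVT
  set h : ℝ → ℝ := fun c' => esymm n k (fun i => u i + c' * v i) with hhdef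
  have hhc : Continuous h := by
    apply (continuous_esymm n k).comp
    exact continuous_pi fun i => continuous_const.add (continuous_id.mul continuous_const)
  have hh0 : 0 < h 0 := by
    have : h 0 = esymm n k u := congrArg (esymm n k) (funext fun i => by simp)
    rw [this]
    exact hu k hk1 le_rfl
  rcases lt_trichotomy (h c) 0 with hlt | heq | hgt
  · exfalso
    have himg : Set.Icc (h c) (h 0) ⊆ h '' Set.Icc 0 c :=
      intermediate_value_Icc' hc hhc.continuousOn
    obtain ⟨x, hx, hhx⟩ := himg ⟨hlt.le, hh0.le⟩
    exact hnonzero x hx.1 hhx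
  · exact absurd heq (hnonzero c hc)
  · exact hgt
lemma natDegree_polR_le (n m : ℕ) (u v : Fin n → ℝ) :
    (polR n m u v).natDegree ≤ m := by
  refine (Polynomial.natDegree_sum_le _ _).trans ?_
  rw [Finset.fold_max_le]
  refine ⟨Nat.zero_le _, fun s hs => ?_⟩
  rw [Finset.mem_powersetCard] at hs
  refine le_trans (Polynomial.natDegree_prod_le _ _) (le_trans
    (Finset.sum_le_card_nsmul s _ 1 fun i _ => natDegree_lin_le _ _) ?_)
  simp [hs.2]

lemma multiset_sum_nonneg (s : Multiset ℝ) (h : ∀ a ∈ s, 0 ≤ a) : 0 ≤ s.sum := by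
  induction s using Multiset.induction_on with
  | empty => simp
  | cons a s ih =>
    rw [Multiset.sum_cons]
    have := h a (Multiset.mem_cons_self a s)
    have := ih fun b hb => h b (Multiset.mem_cons_of_mem hb)
    linarith

lemma multiset_sum_pos (s : Multiset ℝ) (h : ∀ a ∈ s, 0 < a) (hne : s ≠ 0) : 0 < s.sum := by
  induction s using Multiset.induction_on with
  | empty => exact absurd rfl hne
  | cons a s ih =>
    rw [Multiset.sum_cons]
    have h1 := h a (Multiset.mem_cons_self a s)
    have h2 := multiset_sum_nonneg s fun b hb => (h b (Multiset.mem_cons_of_mem hb)).le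
    linarith

lemma multiset_esymm_pos (M : Multiset ℝ) (hM : ∀ a ∈ M, 0 < a) {m : ℕ}
    (hm : m ≤ Multiset.card M) : 0 < M.esymm m := by
  rw [Multiset.esymm]
  refine multiset_sum_pos _ ?_ ?_
  · intro a ha
    rw [Multiset.mem_map] at ha
    obtain ⟨t, ht, rfl⟩ := ha
    rw [Multiset.mem_powersetCard] at ht
    exact Multiset.prod_pos fun b hb => hM b (Multiset.mem_of_le ht.1 hb)
  · intro h0
    have hc := congrArg Multiset.card h0
    rw [Multiset.card_map, Multiset.card_powersetCard, Multiset.card_zero] at hc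
    have := Nat.choose_pos hm
    omega

/-- If all `e_k` shifted values are positive then all `e_m`, `1 ≤ m ≤ k`, are positive. -/
lemma esymm_pos_of_shift_pos (n k : ℕ) (hk1 : 1 ≤ k) (hkn : k ≤ n) {z : Fin n → ℝ}
    (hz : ∀ t : ℝ, 0 ≤ t → 0 < esymm n k (fun i => z i + t)) :
    ∀ m : ℕ, 1 ≤ m → m ≤ k → 0 < esymm n m z := by
  classical
  intro m hm1 hmk
  set p := polR n k z 1 with hp
  have hcoefftop : p.coeff k = (n.choose k : ℝ) := by rw [hp, coeff_polR_top, esymm_one]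
  have hchoosek : (0:ℝ) < (n.choose k : ℝ) := by exact_mod_cast Nat.choose_pos hkn
  have hdeg : p.natDegree = k :=
    le_antisymm (natDegree_polR_le n k z 1)
      (Polynomial.le_natDegree_of_ne_zero (by rw [hcoefftop]; exact ne_of_gt hchoosek))
  have hpne : p ≠ 0 := fun h0 => by
    rw [h0, Polynomial.coeff_zero] at hcoefftop
    linarith
  have hsplit := splits_polR_one n z (n - k) k (by omega)
  rw [← hp] at hsplit
  have hcard : Multiset.card p.roots = k := by
    rw [Polynomial.splits_iff_card_roots.mp hsplit, hdeg]
  have hevalp : ∀ t : ℝ, p.eval t = esymm n k (fun i => z i + t) := by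
    intro t
    rw [hp, eval_polR]
    exact congrArg (esymm n k) (funext fun i => by simp)
  have hroots_neg : ∀ r ∈ p.roots, r < 0 := by
    intro r hr
    by_contra hge
    push_neg at hge
    have he : p.eval r = 0 := Polynomial.isRoot_of_mem_roots hr
    rw [hevalp r] at he
    have := hz r hge
    linarith
  -- identify coefficients with esymm of z
  set q : Polynomial ℝ := ∑ j ∈ Finset.range (k + 1),
    Polynomial.C (((n - j).choose (k - j) : ℝ) * esymm n j z) * Polynomial.X ^ (k - j)
    with hq
  have hpq : p = q := by
    apply Polynomial.funext
    intro t
    rw [hevalp t, esymm_shift n k hkn z t, hq]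
    rw [Polynomial.eval_finset_sum]
    refine Finset.sum_congr rfl fun j _ => ?_
    rw [Polynomial.eval_mul, Polynomial.eval_C, Polynomial.eval_pow, Polynomial.eval_X]
    ring
  have hcoeffq : p.coeff (k - m) = ((n - m).choose (k - m) : ℝ) * esymm n m z := by
    rw [hpq, hq, Polynomial.finset_sum_coeff]
    rw [Finset.sum_eq_single m]
    · rw [Polynomial.coeff_C_mul, Polynomial.coeff_X_pow, if_pos rfl, mul_one]
    · intro j hj hjm
      rw [Finset.mem_range] at hj
      rw [Polynomial.coeff_C_mul, Polynomial.coeff_X_pow, if_neg (by omega), mul_zero]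
    · intro hmem
      exact absurd (Finset.mem_range.mpr (by omega)) hmem
  -- coefficient from the root factorization
  have hlead : p.leadingCoeff = (n.choose k : ℝ) := by
    rw [Polynomial.leadingCoeff, hdeg, hcoefftop]
  set M : Multiset ℝ := p.roots.map (fun r => -r) with hM
  have hMcard : Multiset.card M = k := by rw [hM, Multiset.card_map, hcard]
  have hMpos : ∀ a ∈ M, 0 < a := by
    intro a ha
    rw [hM, Multiset.mem_map] at ha
    obtain ⟨r, hr, rfl⟩ := ha
    have := hroots_neg r hr
    linarith
  have hfact : p = Polynomial.C p.leadingCoeff *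
      (Multiset.map (fun r => Polynomial.X + Polynomial.C r) M).prod := by
    conv_lhs => rw [hsplit.eq_prod_roots]
    congr 1
    rw [hM, Multiset.map_map]
    exact congrArg Multiset.prod (Multiset.map_congr rfl fun r _ => by
      simp [sub_eq_add_neg])
  have hcoeffM : p.coeff (k - m) = (n.choose k : ℝ) * M.esymm m := by
    rw [hfact, Polynomial.coeff_C_mul, hlead]
    congr 1
    have := Multiset.prod_X_add_C_coeff M (k := k - m) (by omega)
    rw [hMcard] at this
    rw [this]
    congr 1
    omega
  have hMesymm : 0 < M.esymm m := multiset_esymm_pos M hMpos (by omega)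
  have hchoosem : (0:ℝ) < ((n - m).choose (k - m) : ℝ) := by
    exact_mod_cast Nat.choose_pos (by omega)
  have : ((n - m).choose (k - m) : ℝ) * esymm n m z = (n.choose k : ℝ) * M.esymm m := by
    rw [← hcoeffq, hcoeffM]
  nlinarith

/-- convex combination stays in the cone -/
lemma GS_combo (n k : ℕ) (hk1 : 1 ≤ k) (hkn : k ≤ n) {x y : Fin n → ℝ}
    (hx : x ∈ GS n k) (hy : y ∈ GS n k) {a b : ℝ} (ha : 0 < a) (hb : 0 < b)
    (hab : a + b = 1) : a • x + b • y ∈ GS n k := by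
  set z : Fin n → ℝ := a • x + b • y with hzdef
  have hco : ∀ p q : ℝ, a * (p + (b/a) * q) = a * p + b * q := by
    intro p q
    field_simp
  have hSk : ∀ t : ℝ, 0 ≤ t → 0 < esymm n k (fun i => z i + t) := by
    intro t ht
    have hx' : (fun i => x i + t) ∈ GS n k := shift_mem_GS hk1 hkn hx ht
    have hy' : (fun i => y i + t) ∈ GS n k := shift_mem_GS hk1 hkn hy ht
    have hfun : (fun i => z i + t)
        = fun i => a * ((x i + t) + (b/a) * (y i + t)) := by
      funext i
      rw [hco (x i + t) (y i + t)]
      simp only [hzdef, Pi.add_apply, Pi.smul_apply, smul_eq_mul]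
      linear_combination (-t) * hab
    rw [hfun, show (fun i => a * ((x i + t) + (b/a) * (y i + t)))
        = fun i => a * ((fun j => x j + t) i + (b/a) * ((fun j => y j + t) i)) from rfl,
      esymm_mul_left]
    have hkp := key_pos n k hk1 hkn hx' hy' (c := b/a) (by positivity)
    have hap : 0 < a ^ k := pow_pos ha k
    exact mul_pos hap hkp
  exact esymm_pos_of_shift_pos n k hk1 hkn hSk
/-- The open Gårding cone `Γ_k^∘` is an open convex cone whose closure is `Γ_k`. -/
theorem garding_cone_open_convex_closure (n k : ℕ) (hk1 : 1 ≤ k) (hkn : k ≤ n) :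
    IsOpen {x : Fin n → ℝ | ∀ m : ℕ, 1 ≤ m → m ≤ k → 0 < esymm n m x} ∧
    Convex ℝ {x : Fin n → ℝ | ∀ m : ℕ, 1 ≤ m → m ≤ k → 0 < esymm n m x} ∧
    (∀ x ∈ {x : Fin n → ℝ | ∀ m : ℕ, 1 ≤ m → m ≤ k → 0 < esymm n m x},
      ∀ c : ℝ, 0 < c →
        c • x ∈ {x : Fin n → ℝ | ∀ m : ℕ, 1 ≤ m → m ≤ k → 0 < esymm n m x}) ∧
    closure {x : Fin n → ℝ | ∀ m : ℕ, 1 ≤ m → m ≤ k → 0 < esymm n m x}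
      = {x : Fin n → ℝ | ∀ m : ℕ, 1 ≤ m → m ≤ k → 0 ≤ esymm n m x} := by
  have hopen : IsOpen (GS n k) := by
    have heq : GS n k = ⋂ m ∈ Finset.Icc 1 k, {x : Fin n → ℝ | 0 < esymm n m x} := by
      ext x
      simp only [GS, Set.mem_setOf_eq, Set.mem_iInter, Finset.mem_Icc]
      exact ⟨fun h m hm => h m hm.1 hm.2, fun h m h1 h2 => h m ⟨h1, h2⟩⟩
    rw [heq]
    exact isOpen_biInter_finset fun m _ => isOpen_lt continuous_const (continuous_esymm n m)
  have hconv : Convex ℝ (GS n k) := by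
    rw [convex_iff_forall_pos]
    intro x hx y hy a b ha hb hab
    exact GS_combo n k hk1 hkn hx hy ha hb hab
  have hcone : ∀ x ∈ GS n k, ∀ c : ℝ, 0 < c → c • x ∈ GS n k := by
    intro x hx c hc m h1 hm
    show 0 < esymm n m (c • x)
    rw [esymm_smul]
    exact mul_pos (pow_pos hc m) (hx m h1 hm)
  have hclose : closure (GS n k) = {x : Fin n → ℝ | ∀ m : ℕ, 1 ≤ m → m ≤ k →
      0 ≤ esymm n m x} := by
    apply subset_antisymm
    · refine closure_minimal (fun x hx m h1 hm => (hx m h1 hm).le) ?_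
      have heq : {x : Fin n → ℝ | ∀ m : ℕ, 1 ≤ m → m ≤ k → 0 ≤ esymm n m x}
          = ⋂ m ∈ Finset.Icc 1 k, {x : Fin n → ℝ | 0 ≤ esymm n m x} := by
        ext x
        simp only [Set.mem_setOf_eq, Set.mem_iInter, Finset.mem_Icc]
        exact ⟨fun h m hm => h m hm.1 hm.2, fun h m h1 h2 => h m ⟨h1, h2⟩⟩
      rw [heq]
      exact isClosed_biInter fun m _ => isClosed_le continuous_const (continuous_esymm n m)
    · intro x hx
      have htend : Filter.Tendsto (fun j : ℕ => (fun i => x i + 1/((j:ℝ)+1) : Fin n → ℝ))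
          Filter.atTop (nhds x) := by
        rw [tendsto_pi_nhds]
        intro i
        have h1 : Filter.Tendsto (fun j : ℕ => x i + 1/((j:ℝ)+1)) Filter.atTop
            (nhds (x i + 0)) :=
          tendsto_const_nhds.add tendsto_one_div_add_atTop_nhds_zero_nat
        simpa using h1
      refine mem_closure_of_tendsto htend (Filter.Eventually.of_forall fun j => ?_)
      exact shift_mem_GS_of_nonneg hk1 hkn hx (by positivity)
  exact ⟨hopen, hconv, hcone, hclose⟩
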